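/- Let φ, α : ℂ → ℂ be entire functions. For all integers n ≥ 1, the n-th iterated Lie derivative X_h^n α is a polynomial in y whose coefficients are the functions E_{n,k}(α,φ); that is, A_n(x,y) = Σ_{k=0}^{n} E_{n,k}(α,φ)(x) · yᵏ for all (x,y) ∈ ℂ², where E_{n,k} is defined by the recurrence E_{1,1} = α', E_{1,k} = 0 for k ≠ 1, and E_{n+1,k} = (E_{n,k−1})' − (k+1)·E_{n,k+1}·φ'. -/

import Mathlib

/-- Over `ℂ`, the derivative of an entire function is entire. -/
lemma deriv_entire' {f : ℂ → ℂ} (hf : Differentiable ℂ f) :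
    Differentiable ℂ (deriv f) := by
  have h : AnalyticOnNhd ℂ f Set.univ :=
    hf.differentiableOn.analyticOnNhd isOpen_univ
  exact differentiableOn_univ.mp h.deriv.differentiableOn

/-- For entire `φ, α : ℂ → ℂ`, the `n`-th iterated Lie derivative
`A n = X_h^n α` (with `X_h = y ∂/∂x − φ'(x) ∂/∂y`) is a polynomial in `y` whose
coefficients are the functions `E n k` defined by the recurrence `E 1 1 = α'`,
`E 1 k = 0` for `k ≠ 1`, and `E (n+1) k = (E n (k−1))' − (k+1) ⬝ E n (k+1) ⬝ φ'`:
for all `n ≥ 1`, `A n (x,y) = Σ_{k=0}^{n} E n k x * y^k`. -/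
theorem statement4
    (φ α : ℂ → ℂ) (hφ : Differentiable ℂ φ) (hα : Differentiable ℂ α)
    (A : ℕ → ℂ × ℂ → ℂ)
    (hA0 : ∀ x y : ℂ, A 0 (x, y) = α x)
    (hArec : ∀ (n : ℕ) (x y : ℂ),
      A (n + 1) (x, y) =
        y * deriv (fun s => A n (s, y)) x - deriv φ x * deriv (fun s => A n (x, s)) y)
    (E : ℕ → ℤ → ℂ → ℂ)
    (hE11 : ∀ x : ℂ, E 1 1 x = deriv α x)
    (hE1k : ∀ k : ℤ, k ≠ 1 → ∀ x : ℂ, E 1 k x = 0)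
    (hErec : ∀ n : ℕ, 1 ≤ n → ∀ (k : ℤ) (x : ℂ),
      E (n + 1) k x = deriv (E n (k - 1)) x - ((k : ℂ) + 1) * E n (k + 1) x * deriv φ x) :
    ∀ n : ℕ, 1 ≤ n → ∀ x y : ℂ,
      A n (x, y) = ∑ k ∈ Finset.range (n + 1), E n (k : ℤ) x * y ^ k := by
  -- E n k vanishes for k < 0 or k > n
  have hEzero : ∀ n : ℕ, 1 ≤ n → ∀ k : ℤ, (k < 0 ∨ (n : ℤ) < k) → ∀ x : ℂ, E n k x = 0 := by
    intro n hn
    induction n, hn using Nat.le_induction with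
    | base =>
      intro k hk x
      apply hE1k
      rcases hk with h | h <;> omega
    | succ n hn IH =>
      intro k hk x
      rw [hErec n hn k x]
      have h1 : E n (k - 1) = fun _ => (0 : ℂ) := by
        funext z; apply IH; rcases hk with h | h
        · left; omega
        · right; omega
      have h2 : ((k : ℂ) + 1) * E n (k + 1) x = 0 := by
        rcases hk with h | h
        · rcases eq_or_lt_of_le (by omega : k ≤ -1) with h' | h'
          · subst h'; norm_num
          · rw [IH (k + 1) (Or.inl (by omega)) x, mul_zero]
        · rw [IH (k + 1) (Or.inr (by omega)) x, mul_zero]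
      rw [h1, h2, deriv_const]
      ring
  -- E n k is entire
  have hEdiff : ∀ n : ℕ, 1 ≤ n → ∀ k : ℤ, Differentiable ℂ (E n k) := by
    intro n hn
    induction n, hn using Nat.le_induction with
    | base =>
      intro k
      by_cases hk : k = 1
      · subst hk
        have : E 1 1 = deriv α := funext hE11
        rw [this]; exact deriv_entire' hα
      · have : E 1 k = fun _ => (0 : ℂ) := funext (hE1k k hk)
        rw [this]; exact differentiable_const 0
    | succ n hn IH =>
      intro k
      have : E (n + 1) k = fun x =>
          deriv (E n (k - 1)) x - ((k : ℂ) + 1) * E n (k + 1) x * deriv φ x :=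
        funext (hErec n hn k)
      rw [this]
      exact (deriv_entire' (IH (k - 1))).sub
        (((differentiable_const _).mul (IH (k + 1))).mul (deriv_entire' hφ))
  -- main induction
  intro n hn
  induction n, hn using Nat.le_induction with
  | base =>
    intro x y
    rw [hArec 0 x y]
    have h1 : (fun s => A 0 (s, y)) = α := funext fun s => hA0 s y
    have h2 : (fun s => A 0 (x, s)) = fun _ => α x := funext fun s => hA0 x s
    rw [h1, h2, deriv_const]
    have h0 : E 1 (0 : ℤ) x = 0 := hE1k 0 (by norm_num) x
    simp [Finset.sum_range_succ, hE11, h0]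
    ring
  | succ n hn IH =>
    intro x y
    rw [hArec n x y]
    have h1 : (fun s => A n (s, y)) =
        fun s => ∑ k ∈ Finset.range (n + 1), E n (k : ℤ) s * y ^ k :=
      funext fun s => IH s y
    have h2 : (fun s => A n (x, s)) =
        fun s => ∑ k ∈ Finset.range (n + 1), E n (k : ℤ) x * s ^ k :=
      funext fun s => IH x s
    rw [h1, h2]
    have hd1 : deriv (fun s => ∑ k ∈ Finset.range (n + 1), E n (k : ℤ) s * y ^ k) x
        = ∑ k ∈ Finset.range (n + 1), deriv (E n (k : ℤ)) x * y ^ k := by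
      have h : HasDerivAt (fun s => ∑ k ∈ Finset.range (n + 1), E n (k : ℤ) s * y ^ k)
          (∑ k ∈ Finset.range (n + 1), deriv (E n (k : ℤ)) x * y ^ k) x :=
        HasDerivAt.fun_sum fun k _ =>
          ((hEdiff n hn (k : ℤ)).differentiableAt.hasDerivAt).mul_const _
      exact h.deriv
    have hd2 : deriv (fun s => ∑ k ∈ Finset.range (n + 1), E n (k : ℤ) x * s ^ k) y
        = ∑ k ∈ Finset.range (n + 1), E n (k : ℤ) x * ((k : ℂ) * y ^ (k - 1)) := by
      have h : HasDerivAt (fun s => ∑ k ∈ Finset.range (n + 1), E n (k : ℤ) x * s ^ k)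
          (∑ k ∈ Finset.range (n + 1), E n (k : ℤ) x * ((k : ℂ) * y ^ (k - 1))) y :=
        HasDerivAt.fun_sum fun k _ => (hasDerivAt_pow k y).const_mul _
      exact h.deriv
    rw [hd1, hd2]
    -- rewrite RHS using the recurrence
    have hR : ∀ k ∈ Finset.range (n + 2),
        E (n + 1) (k : ℤ) x * y ^ k =
          deriv (E n ((k : ℤ) - 1)) x * y ^ k
            - ((k : ℂ) + 1) * E n ((k : ℤ) + 1) x * deriv φ x * y ^ k := by
      intro k _
      rw [hErec n hn (k : ℤ) x]
      push_cast
      ring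
    rw [Finset.sum_congr rfl hR, Finset.sum_sub_distrib]
    -- first sum
    have hS1 : ∑ k ∈ Finset.range (n + 2), deriv (E n ((k : ℤ) - 1)) x * y ^ k
        = y * ∑ k ∈ Finset.range (n + 1), deriv (E n (k : ℤ)) x * y ^ k := by
      rw [Finset.sum_range_succ']
      have hm1 : E n (((0 : ℕ) : ℤ) - 1) = fun _ => (0 : ℂ) := by
        funext z; exact hEzero n hn _ (Or.inl (by norm_num)) z
      rw [hm1, deriv_const]
      rw [Finset.mul_sum]
      simp only [zero_mul, add_zero]
      refine Finset.sum_congr rfl fun k _ => ?_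
      rw [show (((k + 1 : ℕ) : ℤ)) - 1 = (k : ℤ) by push_cast; ring]
      ring
    -- second sum
    have hS2 : ∑ k ∈ Finset.range (n + 2), ((k : ℂ) + 1) * E n ((k : ℤ) + 1) x * deriv φ x * y ^ k
        = deriv φ x * ∑ k ∈ Finset.range (n + 1), E n (k : ℤ) x * ((k : ℂ) * y ^ (k - 1)) := by
      rw [Finset.sum_range_succ, Finset.sum_range_succ]
      have z1 : E n ((n : ℤ) + 1) x = 0 := hEzero n hn _ (Or.inr (by omega)) x
      have z2 : E n (((n + 1 : ℕ) : ℤ) + 1) x = 0 := hEzero n hn _ (Or.inr (by omega)) x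
      rw [z1, z2]
      rw [Finset.sum_range_succ' (fun k => E n (k : ℤ) x * ((k : ℂ) * y ^ (k - 1))) n]
      simp only [Nat.cast_zero, zero_mul, mul_zero, add_zero, zero_add]
      rw [Finset.mul_sum]
      refine Finset.sum_congr rfl fun k _ => ?_
      have hc : ((k + 1 : ℕ) : ℤ) = (k : ℤ) + 1 := by push_cast; ring
      rw [hc]
      have hp : (k + 1) - 1 = k := rfl
      rw [hp]
      push_cast
      ring
    rw [hS1, hS2]
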